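/- Lemma (convergence of generators, logistic branching case). Under the standing assumptions, for every three times continuously differentiable function f : ℝ → ℝ such that f, f', f'' and f''' are bounded, and every compact set K ⊆ ℝ, writing x̂ := μ_N + x σ_N, one has lim_{N→∞} sup_{x ∈ E_N ∩ K, x̂ ≥ 1} | Σ_{j≥1} h_N(x̂) x̂ π_j (f(x + j/σ_N) − f(x)) + ρ_N^{−1} (d_N x̂ + c_N x̂ (x̂ − 1)) (f(x − 1/σ_N) − f(x)) − ( − π̄ x f'(x) + ((v² + π̄)/2) f''(x) ) | = 0. (The displayed expression is the generator of the time-rescaled, centred and normalised logistic branching process X̃^N_t = (X^N_{t/ρ_N} − μ_N)/σ_N evaluated at the restriction of f to E_N, and −π̄ x f'(x) + ((v²+π̄)/2) f''(x) is the generator of the Ornstein–Uhlenbeck process with drift parameter π̄ and variance parameter v² + π̄.) -/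

import Mathlib

open Filter Set

private lemma iDW_eq_global {f : ℝ → ℝ} {n : ℕ} {m : ℕ} (hf : ContDiff ℝ n f) (hmn : m ≤ n)
    {s : Set ℝ} (hs : UniqueDiffOn ℝ s) :
    ∀ x ∈ s, iteratedDerivWithin m f s x = iteratedDeriv m f x := by
  induction m with
  | zero => simp [iteratedDerivWithin_zero, iteratedDeriv_zero]
  | succ m IH =>
    intro x hx
    rw [iteratedDerivWithin_succ, iteratedDeriv_succ]
    rw [derivWithin_congr (fun y hy => IH (le_of_lt (Nat.lt_of_succ_le hmn)) y hy)
      (IH (le_of_lt (Nat.lt_of_succ_le hmn)) x hx)]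
    exact DifferentiableAt.derivWithin
      ((hf.differentiable_iteratedDeriv m (by exact_mod_cast Nat.lt_of_succ_le hmn)).differentiableAt)
      (hs x hx)

private lemma taylor2_lt {f : ℝ → ℝ} (hf : ContDiff ℝ 3 f) {M : ℝ}
    (hM : ∀ t, |iteratedDeriv 3 f t| ≤ M) {x y : ℝ} (hxy : x < y) :
    |f y - f x - (y - x) * deriv f x - (y - x)^2 / 2 * iteratedDeriv 2 f x| ≤ M * |y - x|^3 / 6 := by
  have hud : UniqueDiffOn ℝ (Icc x y) := uniqueDiffOn_Icc hxy
  have hco : ContDiffOn ℝ 2 f (Icc x y) := (hf.of_le (by norm_num)).contDiffOn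
  have hdo : DifferentiableOn ℝ (iteratedDerivWithin 2 f (Icc x y)) (Ioo x y) := by
    refine DifferentiableOn.congr
      (((hf.differentiable_iteratedDeriv 2 (by norm_num)).differentiableOn) :
        DifferentiableOn ℝ (iteratedDeriv 2 f) (Ioo x y))
      (fun t ht => iDW_eq_global hf (by norm_num) hud t (Ioo_subset_Icc_self ht))
  obtain ⟨x', hx', hx'eq⟩ := taylor_mean_remainder_lagrange (n := 2) hxy.ne (by rwa [uIcc_of_le hxy.le]) (by rwa [uIcc_of_le hxy.le, uIoo_of_le hxy.le])
  rw [uIoo_of_le hxy.le] at hx'; rw [uIcc_of_le hxy.le] at hx'eq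
  have hxmem : x ∈ Icc x y := left_mem_Icc.mpr hxy.le
  have htay : taylorWithinEval f 2 (Icc x y) x y
      = f x + (y - x) * deriv f x + (y - x)^2 / 2 * iteratedDeriv 2 f x := by
    rw [taylor_within_apply]
    rw [Finset.sum_range_succ, Finset.sum_range_succ, Finset.sum_range_one]
    rw [iDW_eq_global hf (by norm_num) hud x hxmem, iDW_eq_global hf (by norm_num) hud x hxmem,
      iDW_eq_global hf (by norm_num) hud x hxmem]
    simp only [iteratedDeriv_zero, iteratedDeriv_one, smul_eq_mul, Nat.factorial]
    push_cast
    ring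
  have h3 : iteratedDerivWithin 3 f (Icc x y) x' = iteratedDeriv 3 f x' :=
    iDW_eq_global hf le_rfl hud x' (Ioo_subset_Icc_self hx')
  rw [htay, h3] at hx'eq
  have hfact : ((2 + 1).factorial : ℝ) = 6 := by norm_num [Nat.factorial]
  rw [hfact] at hx'eq
  have heq : f y - f x - (y - x) * deriv f x - (y - x)^2 / 2 * iteratedDeriv 2 f x
      = iteratedDeriv 3 f x' * (y - x)^3 / 6 := by
    rw [show (2 + 1 : ℕ) = 3 from rfl] at hx'eq
    linarith [hx'eq]
  rw [heq, abs_div, abs_mul, abs_pow]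
  have h1 : |iteratedDeriv 3 f x'| * |y - x| ^ 3 ≤ M * |y - x|^3 :=
    mul_le_mul_of_nonneg_right (hM x') (by positivity)
  calc |iteratedDeriv 3 f x'| * |y - x| ^ 3 / |(6:ℝ)|
      = |iteratedDeriv 3 f x'| * |y - x| ^ 3 / 6 := by norm_num
    _ ≤ M * |y - x|^3 / 6 := by linarith

private lemma taylor2_bound {f : ℝ → ℝ} (hf : ContDiff ℝ 3 f) {M : ℝ}
    (hM : ∀ t, |iteratedDeriv 3 f t| ≤ M) (x y : ℝ) :
    |f y - f x - (y - x) * deriv f x - (y - x)^2 / 2 * iteratedDeriv 2 f x| ≤ M * |y - x|^3 / 6 := by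
  rcases lt_trichotomy x y with hxy | hxy | hxy
  · exact taylor2_lt hf hM hxy
  · subst hxy
    have hM0 : (0:ℝ) ≤ M := le_trans (abs_nonneg _) (hM x)
    simp only [sub_self, zero_mul, zero_div, sub_zero, abs_zero]
    norm_num
  · set F : ℝ → ℝ := fun t => f (2*x + -t) with hF
    have hFc : ContDiff ℝ 3 F := hf.comp ((contDiff_const.add contDiff_neg))
    have hFit : ∀ n : ℕ, ∀ t : ℝ, iteratedDeriv n F t = (-1:ℝ)^n * iteratedDeriv n f (2*x - t) := by
      intro n t
      have h1 := iteratedDeriv_comp_neg n (fun z => f (2*x + z)) t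
      have h2 : iteratedDeriv n (fun z => f (2*x + z)) = fun t => iteratedDeriv n f (2*x + t) :=
        iteratedDeriv_comp_const_add n f (2*x)
      rw [hF]
      simp only [h1, h2, smul_eq_mul]
      ring_nf
    have hFM : ∀ t, |iteratedDeriv 3 F t| ≤ M := by
      intro t
      rw [hFit 3 t]
      rw [abs_mul]
      simpa using hM (2*x - t)
    have key := taylor2_lt hFc hFM (x := x) (y := 2*x - y) (by linarith)
    have e0 : F x = f x := by show f (2*x + -x) = f x; congr 1; ring
    have e1 : F (2*x - y) = f y := by show f (2*x + -(2*x - y)) = f y; congr 1; ring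
    have e2 : deriv F x = - deriv f x := by
      have := hFit 1 x
      rw [iteratedDeriv_one, show 2*x - x = x by ring] at this
      simpa using this
    have e3 : iteratedDeriv 2 F x = iteratedDeriv 2 f x := by
      have := hFit 2 x
      rw [show 2*x - x = x by ring] at this
      simpa using this
    rw [e0, e1, e2, e3] at key
    have : (2*x - y - x) * -deriv f x = (y - x) * deriv f x := by ring
    rw [this] at key
    have h2 : (2*x - y - x)^2 = (y - x)^2 := by ring
    rw [h2] at key
    have h3 : |2*x - y - x| = |y - x| := by rw [abs_sub_comm]; congr 1; ring
    rwa [h3] at key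


private lemma E2_id (s x H dd cc pb v2 : ℝ) (hs : s ≠ 0) (hc : cc ≠ 0) :
    H*(s^2+x*s)*v2/(2*s^2)
      + (pb*((dd/cc)*(s^2+x*s) + (s^2+x*s)*((s^2+x*s)-1))/s^2)/(2*s^2) - (v2+pb)/2
      = (v2*((H-1)*(s+x)/s + x/s) + pb*((s+x)*((dd/cc)-1)/s^3 + 2*x/s + x^2/s^2))/2 := by
  field_simp
  ring

set_option maxHeartbeats 1600000 in
theorem logistic_generator_convergence
    (π : ℕ → ℝ) (hπ0 : π 0 = 0) (hπnn : ∀ j, 0 ≤ π j) (hπsum : ∑' j : ℕ, π j = 1)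
    (πbar v2 : ℝ)
    (hmean : HasSum (fun j : ℕ => (j : ℝ) * π j) πbar)
    (hsecond : HasSum (fun j : ℕ => (j : ℝ) ^ 2 * π j) v2)
    (hthird : Summable (fun j : ℕ => (j : ℝ) ^ 3 * π j))
    (ρ d c : ℕ → ℝ) (h : ℕ → ℕ → ℝ)
    (hρ : ∀ N, 0 < ρ N) (hd : ∀ N, 0 ≤ d N) (hc : ∀ N, 0 < c N)
    (hhpos : ∀ N k, 0 < h N k) (hhbdd : ∀ N, ∃ M : ℝ, ∀ k, h N k ≤ M)
    (μ σ : ℕ → ℝ)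
    (hμ : ∀ N, μ N = πbar * ρ N / c N) (hσ : ∀ N, σ N = Real.sqrt (μ N))
    (hρ0 : Tendsto ρ atTop (nhds 0))
    (hρc : Tendsto (fun N => ρ N / c N) atTop atTop)
    (hdc : Tendsto (fun N => d N / c N) atTop (nhds 0))
    (hh : ∃ C : ℝ, ∃ ε : ℕ → ℝ, Tendsto ε atTop (nhds 0) ∧
      ∀ N k, |h N k - 1| ≤ C * ε N * |(k : ℝ) - μ N| / μ N)
    (f : ℝ → ℝ) (hf : ContDiff ℝ 3 f)
    (hbdd : ∀ i : ℕ, i ≤ 3 → ∃ M : ℝ, ∀ x : ℝ, |iteratedDeriv i f x| ≤ M)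
    (K : Set ℝ) (hK : IsCompact K) :
    Tendsto (fun N : ℕ =>
      sSup ((fun k : ℕ =>
        |(∑' j : ℕ, h N k * (k : ℝ) * π j *
            (f (((k : ℝ) - μ N) / σ N + (j : ℝ) / σ N) - f (((k : ℝ) - μ N) / σ N)))
          + (ρ N)⁻¹ * (d N * (k : ℝ) + c N * (k : ℝ) * ((k : ℝ) - 1)) *
            (f (((k : ℝ) - μ N) / σ N - 1 / σ N) - f (((k : ℝ) - μ N) / σ N))
          - (-(πbar * (((k : ℝ) - μ N) / σ N) * deriv f (((k : ℝ) - μ N) / σ N))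
              + ((v2 + πbar) / 2) * iteratedDeriv 2 f (((k : ℝ) - μ N) / σ N))|)
        '' {k : ℕ | 1 ≤ k ∧ ((k : ℝ) - μ N) / σ N ∈ K}))
      atTop (nhds 0) := by
  classical
  obtain ⟨C, ε, hεt, hhC⟩ := hh
  -- positivity of the mean
  have hπbar_pos : 0 < πbar := by
    by_contra hle
    push_neg at hle
    have hz : ∀ j : ℕ, (j : ℝ) * π j = 0 := by
      intro j
      have h1 : (j : ℝ) * π j ≤ πbar := le_hasSum hmean j (fun i _ => mul_nonneg (Nat.cast_nonneg i) (hπnn i))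
      have h2 : 0 ≤ (j : ℝ) * π j := mul_nonneg (Nat.cast_nonneg j) (hπnn j)
      linarith
    have hπz : ∀ j, π j = 0 := by
      intro j
      cases j with
      | zero => exact hπ0
      | succ m =>
        have := hz (m+1)
        have hms : (0:ℝ) < (m:ℝ) + 1 := by positivity
        have : ((m:ℝ)+1) * π (m+1) = 0 := by push_cast at this ⊢; linarith [this]
        rcases mul_eq_zero.mp this with h' | h'
        · linarith
        · exact h'
    have : (∑' j : ℕ, π j) = 0 := by
      simp only [hπz, tsum_zero]
    rw [hπsum] at this
    norm_num at this
  have hv2 : 0 ≤ v2 := hsecond.nonneg (fun j => mul_nonneg (by positivity) (hπnn j))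
  set m₃ : ℝ := ∑' j : ℕ, (j:ℝ)^3 * π j with hm₃
  have hm₃nn : 0 ≤ m₃ := tsum_nonneg (fun j => mul_nonneg (by positivity) (hπnn j))
  -- derivative bounds
  obtain ⟨M₁, hM₁⟩ := hbdd 1 (by norm_num)
  obtain ⟨M₂, hM₂⟩ := hbdd 2 (by norm_num)
  obtain ⟨M₃, hM₃⟩ := hbdd 3 (by norm_num)
  have hM₁0 : 0 ≤ M₁ := le_trans (abs_nonneg _) (hM₁ 0)
  have hM₂0 : 0 ≤ M₂ := le_trans (abs_nonneg _) (hM₂ 0)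
  have hM₃0 : 0 ≤ M₃ := le_trans (abs_nonneg _) (hM₃ 0)
  have hD1 : ∀ x : ℝ, |deriv f x| ≤ M₁ := by
    intro x; rw [← iteratedDeriv_one]; exact hM₁ x
  -- compact set bound
  obtain ⟨R₀, hR₀⟩ := hK.isBounded.subset_closedBall 0
  set R : ℝ := max R₀ 0 with hRdef
  have hR0 : 0 ≤ R := le_max_right _ _
  have hR : ∀ x ∈ K, |x| ≤ R := by
    intro x hx
    have := hR₀ hx
    rw [Metric.mem_closedBall, Real.dist_eq, sub_zero] at this
    exact le_trans this (le_max_left _ _)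
  -- basic positivity
  have hμpos : ∀ N, 0 < μ N := fun N => by
    rw [hμ]; exact div_pos (mul_pos hπbar_pos (hρ N)) (hc N)
  have hσpos : ∀ N, 0 < σ N := fun N => by
    rw [hσ]; exact Real.sqrt_pos.mpr (hμpos N)
  have hσsq : ∀ N, σ N ^ 2 = μ N := fun N => by
    rw [hσ, Real.sq_sqrt (hμpos N).le]
  -- parameters
  set e : ℕ → ℝ := fun N => |C| * |ε N| with hedef
  set q : ℕ → ℝ := fun N => d N / c N with hqdef
  have he0 : ∀ N, 0 ≤ e N := fun N => by positivity
  have hq0 : ∀ N, 0 ≤ q N := fun N => div_nonneg (hd N) (hc N).le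
  have hhe : ∀ N k, |h N k - 1| ≤ e N * |(k:ℝ) - μ N| / μ N := by
    intro N k
    refine le_trans (hhC N k) ?_
    have h1 : C * ε N ≤ e N := by
      calc C * ε N ≤ |C * ε N| := le_abs_self _
        _ = e N := by rw [abs_mul]
    gcongr
    exact (hμpos N).le
  -- tendsto facts
  have hμtop : Tendsto μ atTop atTop := by
    have : μ = fun N => πbar * (ρ N / c N) := by
      funext N; rw [hμ, mul_div_assoc]
    rw [this]
    exact Tendsto.const_mul_atTop hπbar_pos hρc
  have hσtop : Tendsto σ atTop atTop := by
    rw [tendsto_atTop]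
    intro b
    filter_upwards [hμtop.eventually_ge_atTop ((max b 0)^2)] with N hN
    rw [hσ]
    calc b ≤ max b 0 := le_max_left _ _
      _ = Real.sqrt ((max b 0)^2) := (Real.sqrt_sq (le_max_right _ _)).symm
      _ ≤ Real.sqrt (μ N) := Real.sqrt_le_sqrt hN
  have hσinv : Tendsto (fun N => (σ N)⁻¹) atTop (nhds 0) := hσtop.inv_tendsto_atTop
  have het : Tendsto e atTop (nhds 0) := by
    have : Tendsto (fun N => |C| * |ε N|) atTop (nhds (|C| * |(0:ℝ)|)) :=
      (tendsto_const_nhds.mul (hεt.abs))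
    simpa using this
  -- the bounding sequence
  set b : ℕ → ℝ := fun N =>
    πbar*((1+R)*(e N)*R + ((1+R)*(q N+1) + R^2) * (σ N)⁻¹)*M₁
    + (v2*((1+R)*(e N)*R + R) + πbar*((1+R)*(q N+1) + 2*R + R^2)) * (σ N)⁻¹/2*M₂
    + (1+(e N)*R)*(1+R)*M₃*m₃/6*(σ N)⁻¹
    + πbar*(1+R)*(q N+(1+R))*M₃/6*(σ N)⁻¹ with hbdef
  have hbt : Tendsto b atTop (nhds 0) := by
    have h1 : Tendsto (fun N => (e N, q N, (σ N)⁻¹)) atTop (nhds ((0:ℝ), (0:ℝ), (0:ℝ))) :=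
      het.prodMk_nhds (hdc.prodMk_nhds hσinv)
    have hcont : Continuous (fun p : ℝ × ℝ × ℝ =>
        πbar*((1+R)*p.1*R + ((1+R)*(p.2.1+1) + R^2) * p.2.2)*M₁
        + (v2*((1+R)*p.1*R + R) + πbar*((1+R)*(p.2.1+1) + 2*R + R^2)) * p.2.2/2*M₂
        + (1+p.1*R)*(1+R)*M₃*m₃/6*p.2.2
        + πbar*(1+R)*(p.2.1+(1+R))*M₃/6*p.2.2) := by fun_prop
    have := (hcont.tendsto ((0:ℝ), (0:ℝ), (0:ℝ))).comp h1
    simp only [Function.comp_def] at this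
    convert this using 2
    · norm_num
  -- nonnegativity of b when σ N ≥ 1 (indeed always, σ > 0)
  have hb0 : ∀ N, 0 ≤ b N := by
    intro N
    have h1 := hσpos N
    have h2 := he0 N
    have h3 := hq0 N
    have : (0:ℝ) < (σ N)⁻¹ := by positivity
    positivity
  -- the key pointwise estimate
  have key : ∀ N : ℕ, 1 ≤ σ N → ∀ k : ℕ, 1 ≤ k → ((k : ℝ) - μ N) / σ N ∈ K →
      |(∑' j : ℕ, h N k * (k : ℝ) * π j *
            (f (((k : ℝ) - μ N) / σ N + (j : ℝ) / σ N) - f (((k : ℝ) - μ N) / σ N)))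
          + (ρ N)⁻¹ * (d N * (k : ℝ) + c N * (k : ℝ) * ((k : ℝ) - 1)) *
            (f (((k : ℝ) - μ N) / σ N - 1 / σ N) - f (((k : ℝ) - μ N) / σ N))
          - (-(πbar * (((k : ℝ) - μ N) / σ N) * deriv f (((k : ℝ) - μ N) / σ N))
              + ((v2 + πbar) / 2) * iteratedDeriv 2 f (((k : ℝ) - μ N) / σ N))| ≤ b N := by
    intro N hs1 k hk1 hxK
    set s : ℝ := σ N with hsdef
    have hspos : 0 < s := hσpos N
    have hsne : s ≠ 0 := ne_of_gt hspos
    set x : ℝ := ((k:ℝ) - μ N) / s with hxdef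
    have hxR : |x| ≤ R := hR x hxK
    have hkcast : (1:ℝ) ≤ (k:ℝ) := by exact_mod_cast hk1
    have hsq : s^2 = μ N := hσsq N
    have hxs : x * s = (k:ℝ) - μ N := div_mul_cancel₀ _ hsne
    have hkx : (k:ℝ) = s^2 + x*s := by linarith only [hsq, hxs]
    have hk0 : (0:ℝ) ≤ (k:ℝ) := Nat.cast_nonneg k
    have hRs : R ≤ R * s := le_mul_of_one_le_right hR0 hs1
    have hRss : R*s ≤ R*(s*s) := by
      have h0 : (0:ℝ) ≤ R*s := mul_nonneg hR0 hspos.le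
      calc R*s = R*s*1 := by ring
        _ ≤ R*s*s := mul_le_mul_of_nonneg_left hs1 h0
        _ = R*(s*s) := by ring
    have hkub : (k:ℝ) ≤ (1+R)*s^2 := by
      have h1 : x*s ≤ R*s := by
        have h2 : x ≤ R := le_trans (le_abs_self x) hxR
        exact mul_le_mul_of_nonneg_right h2 hspos.le
      have h3 : (1+R)*s^2 = s^2 + R*(s*s) := by ring
      rw [h3]
      linarith only [hkx, h1, hRss]
    clear_value x
    clear_value s
    set D1 : ℝ := deriv f x with hD1def
    set D2 : ℝ := iteratedDeriv 2 f x with hD2def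
    -- Taylor bounds
    have htayA : ∀ j : ℕ, |f (x + (j:ℝ)/s) - f x - ((j:ℝ)/s)*D1 - ((j:ℝ)/s)^2/2*D2|
        ≤ M₃*((j:ℝ)/s)^3/6 := by
      intro j
      have ht := taylor2_bound hf hM₃ x (x + (j:ℝ)/s)
      rw [show x + (j:ℝ)/s - x = (j:ℝ)/s by ring] at ht
      rwa [abs_of_nonneg (div_nonneg (Nat.cast_nonneg j) hspos.le)] at ht
    set r : ℕ → ℝ := fun j =>
      f (x + (j:ℝ)/s) - f x - ((j:ℝ)/s)*D1 - ((j:ℝ)/s)^2/2*D2 with hrdef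
    have hrabs : ∀ j, |π j * r j| ≤ (j:ℝ)^3*π j * (M₃/(6*s^3)) := by
      intro j
      rw [abs_mul, abs_of_nonneg (hπnn j)]
      calc π j * |r j| ≤ π j * (M₃*((j:ℝ)/s)^3/6) :=
            mul_le_mul_of_nonneg_left (htayA j) (hπnn j)
        _ = (j:ℝ)^3*π j * (M₃/(6*s^3)) := by field_simp [hsne, (hc N).ne', (ne_of_gt hπbar_pos)]
    have hsum3 : Summable (fun j : ℕ => (j:ℝ)^3*π j * (M₃/(6*s^3))) := hthird.mul_right _
    have hrsum : Summable (fun j : ℕ => π j * r j) := by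
      apply Summable.of_abs
      exact Summable.of_nonneg_of_le (fun j => abs_nonneg _) hrabs hsum3
    set RA : ℝ := ∑' j : ℕ, π j * r j with hRAdef
    have hRAb : |RA| ≤ m₃ * (M₃/(6*s^3)) := by
      have h1 : |RA| ≤ ∑' j : ℕ, |π j * r j| := by
        simpa only [Real.norm_eq_abs] using norm_tsum_le_tsum_norm
          (by simpa only [Real.norm_eq_abs] using hrsum.abs : Summable fun j : ℕ => ‖π j * r j‖)
      have h2 : (∑' j : ℕ, |π j * r j|) ≤ ∑' j : ℕ, (j:ℝ)^3*π j * (M₃/(6*s^3)) :=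
        Summable.tsum_le_tsum hrabs hrsum.abs hsum3
      have h3 : (∑' j : ℕ, (j:ℝ)^3*π j * (M₃/(6*s^3))) = m₃ * (M₃/(6*s^3)) := by
        rw [hm₃, tsum_mul_right]
      linarith only [h1, h2, h3]
    have h1s : HasSum (fun j : ℕ => (j:ℝ)*π j*(D1/s)) (πbar*(D1/s)) := hmean.mul_right _
    have h2s : HasSum (fun j : ℕ => (j:ℝ)^2*π j*(D2/(2*s^2))) (v2*(D2/(2*s^2))) :=
      hsecond.mul_right _
    have hgsum : HasSum (fun j : ℕ => π j * (f (x + (j:ℝ)/s) - f x))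
        (πbar*(D1/s) + v2*(D2/(2*s^2)) + RA) := by
      have hpt : ∀ j : ℕ, f (x + (j:ℝ)/s) - f x
          = ((j:ℝ)/s)*D1 + ((j:ℝ)/s)^2/2*D2 + r j := by
        intro j
        show f (x + (j:ℝ)/s) - f x = ((j:ℝ)/s)*D1 + ((j:ℝ)/s)^2/2*D2
          + (f (x + (j:ℝ)/s) - f x - ((j:ℝ)/s)*D1 - ((j:ℝ)/s)^2/2*D2)
        ring
      have hfeq : (fun j : ℕ => π j * (f (x + (j:ℝ)/s) - f x))
          = fun j : ℕ => ((j:ℝ)*π j*(D1/s) + (j:ℝ)^2*π j*(D2/(2*s^2))) + π j * r j := by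
        funext j
        rw [hpt j]
        ring
      rw [hfeq]
      exact (h1s.add h2s).add hrsum.hasSum
    have hAeq : (∑' j : ℕ, h N k * (k:ℝ) * π j * (f (x + (j:ℝ)/s) - f x))
        = h N k * (k:ℝ) * (πbar*(D1/s) + v2*(D2/(2*s^2)) + RA) := by
      rw [← hgsum.tsum_eq, ← tsum_mul_left]
      exact tsum_congr (fun j => by ring)
    -- second Taylor bound
    set rB : ℝ := f (x - 1/s) - f x + (1/s)*D1 - (1/s)^2/2*D2 with hrBdef
    have hrBb : |rB| ≤ M₃/(6*s^3) := by
      have ht := taylor2_bound hf hM₃ x (x - 1/s)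
      rw [show x - 1/s - x = -(1/s) by ring] at ht
      rw [show |(-(1/s))| = 1/s by rw [abs_neg, abs_of_nonneg (by positivity : (0:ℝ) ≤ 1/s)]] at ht
      have he1 : f (x - 1/s) - f x - (-(1/s))*D1 - (-(1/s))^2/2*D2 = rB := by
        rw [hrBdef]; ring
      rw [he1] at ht
      calc |rB| ≤ M₃ * (1/s)^3/6 := ht
        _ = M₃/(6*s^3) := by rw [div_pow, one_pow]; ring
    set β : ℝ := (ρ N)⁻¹ * (d N * (k:ℝ) + c N * (k:ℝ) * ((k:ℝ) - 1)) with hβdef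
    have hρval : ρ N = c N * s^2 / πbar := by
      have h0 : μ N = πbar * ρ N / c N := hμ N
      have h1 : s^2 * c N = πbar * ρ N := by
        rw [hsq, h0]
        exact div_mul_cancel₀ _ (ne_of_gt (hc N))
      rw [eq_div_iff (ne_of_gt hπbar_pos)]
      linarith only [h1]
    have hqN : q N = d N / c N := rfl
    have hβval : β = πbar * (q N * (k:ℝ) + (k:ℝ)*((k:ℝ)-1)) / s^2 := by
      rw [hβdef, hρval, hqN]
      field_simp [hsne, (hc N).ne', (ne_of_gt hπbar_pos)]
    have hβ0 : 0 ≤ β := by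
      rw [hβdef]
      apply mul_nonneg (inv_nonneg.mpr (hρ N).le)
      apply add_nonneg (mul_nonneg (hd N) hk0)
      apply mul_nonneg (mul_nonneg (hc N).le hk0)
      linarith only [hkcast]
    have hBeq : β * (f (x - 1/s) - f x) = β*(-(1/s)*D1 + (1/s)^2/2*D2) + β*rB := by
      rw [hrBdef]; ring
    -- master decomposition
    set E₁ : ℝ := h N k * (k:ℝ) * πbar/s - β/s + πbar*x with hE₁def
    set E₂ : ℝ := h N k * (k:ℝ) * v2/(2*s^2) + β/(2*s^2) - (v2+πbar)/2 with hE₂def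
    have hsplit : (∑' j : ℕ, h N k * (k:ℝ) * π j * (f (x + (j:ℝ)/s) - f x))
          + β * (f (x - 1/s) - f x)
          - (-(πbar * x * D1) + (v2 + πbar)/2 * D2)
        = E₁*D1 + E₂*D2 + (h N k * (k:ℝ))*RA + β*rB := by
      rw [hAeq, hBeq, hE₁def, hE₂def]
      field_simp [hsne, (hc N).ne', (ne_of_gt hπbar_pos)]
      ring
    -- ingredient bounds
    have hsx : |s + x| ≤ (1+R)*s := by
      calc |s + x| ≤ |s| + |x| := abs_add_le _ _
        _ ≤ s + R*s := by rw [abs_of_pos hspos]; linarith only [hxR, hRs]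
        _ = (1+R)*s := by ring
    have hh1 : |h N k - 1| ≤ e N * R * s⁻¹ := by
      have h0 := hhe N k
      have hkμ : |(k:ℝ) - μ N| = |x| * s := by
        rw [← hxs, abs_mul, abs_of_pos hspos]
      rw [hkμ, ← hsq] at h0
      calc |h N k - 1| ≤ e N * (|x| * s) / s^2 := h0
        _ = e N * |x| * s⁻¹ := by field_simp [hsne, (hc N).ne', (ne_of_gt hπbar_pos)]
        _ ≤ e N * R * s⁻¹ := by
            apply mul_le_mul_of_nonneg_right _ (by positivity)
            exact mul_le_mul_of_nonneg_left hxR (he0 N)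
    have hhub : h N k ≤ 1 + e N * R := by
      have h1 : h N k - 1 ≤ |h N k - 1| := le_abs_self _
      have h2 : e N * R * s⁻¹ ≤ e N * R := by
        apply mul_le_of_le_one_right (mul_nonneg (he0 N) hR0)
        rw [inv_le_one_iff₀]
        right; exact hs1
      linarith only [h1, h2, hh1]
    have hqabs : |q N - 1| ≤ q N + 1 := by
      rw [abs_sub_comm]
      calc |1 - q N| ≤ |1| + |q N| := abs_sub _ _
        _ = 1 + q N := by rw [abs_one, abs_of_nonneg (hq0 N)]
        _ = q N + 1 := by ring
    -- E₁ bound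
    have hE₁eq : E₁ = πbar*((s+x)*(h N k - 1) - (s+x)*(q N - 1)/s^2 - x^2/s) := by
      rw [hE₁def, hβval, hkx, hqdef]
      field_simp [hsne, (hc N).ne', (ne_of_gt hπbar_pos)]
      ring
    have hE₁b : |E₁| ≤ πbar*((1+R)*(e N)*R + ((1+R)*(q N+1) + R^2) * s⁻¹) := by
      rw [hE₁eq, abs_mul, abs_of_pos hπbar_pos]
      apply mul_le_mul_of_nonneg_left _ hπbar_pos.le
      have t1 : |(s+x)*(h N k - 1)| ≤ (1+R)*(e N)*R := by
        rw [abs_mul]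
        calc |s+x| * |h N k - 1| ≤ ((1+R)*s) * (e N * R * s⁻¹) :=
              mul_le_mul hsx hh1 (abs_nonneg _) (by positivity)
          _ = (1+R)*(e N)*R := by field_simp [hsne, (hc N).ne', (ne_of_gt hπbar_pos)]
      have t2 : |(s+x)*(q N - 1)/s^2| ≤ (1+R)*(q N+1)*s⁻¹ := by
        rw [abs_div, abs_mul, abs_pow, abs_of_pos hspos]
        calc |s+x| * |q N - 1| / s^2 ≤ ((1+R)*s) * (q N + 1) / s^2 := by
              apply div_le_div_of_nonneg_right _ (by positivity)
              exact mul_le_mul hsx hqabs (abs_nonneg _) (by positivity)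
          _ = (1+R)*(q N+1)*s⁻¹ := by field_simp [hsne, (hc N).ne', (ne_of_gt hπbar_pos)]
      have t3 : |x^2/s| ≤ R^2*s⁻¹ := by
        rw [abs_div, abs_pow, abs_of_pos hspos]
        calc |x|^2/s ≤ R^2/s := by
              apply div_le_div_of_nonneg_right _ hspos.le
              exact pow_le_pow_left₀ (abs_nonneg x) hxR 2
          _ = R^2*s⁻¹ := by ring
      calc |(s+x)*(h N k - 1) - (s+x)*(q N - 1)/s^2 - x^2/s|
          = |(s+x)*(h N k - 1) + (-((s+x)*(q N - 1)/s^2)) + (-(x^2/s))| := by ring_nf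
        _ ≤ |(s+x)*(h N k - 1)| + |(-((s+x)*(q N - 1)/s^2))| + |(-(x^2/s))| := abs_add_three _ _ _
        _ = |(s+x)*(h N k - 1)| + |(s+x)*(q N - 1)/s^2| + |x^2/s| := by rw [abs_neg, abs_neg]
        _ ≤ (1+R)*(e N)*R + (1+R)*(q N+1)*s⁻¹ + R^2*s⁻¹ := by linarith only [t1, t2, t3]
        _ = (1+R)*(e N)*R + ((1+R)*(q N+1) + R^2) * s⁻¹ := by ring
    -- E₂ bound
    have hE₂eq : E₂ = (v2*((h N k - 1)*(s+x)/s + x/s)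
        + πbar*((s+x)*(q N - 1)/s^3 + 2*x/s + x^2/s^2))/2 := by
      rw [hE₂def, hβval, hkx, hqN]
      linarith only [E2_id s x (h N k) (d N) (c N) πbar v2 hsne (ne_of_gt (hc N))]
    have hE₂b : |E₂| ≤ (v2*((1+R)*(e N)*R + R) + πbar*((1+R)*(q N+1) + 2*R + R^2)) * s⁻¹/2 := by
      rw [hE₂eq]
      rw [abs_div, abs_of_pos (by norm_num : (0:ℝ) < 2)]
      apply div_le_div_of_nonneg_right _ (by norm_num : (0:ℝ) ≤ 2)
      have u1 : |(h N k - 1)*(s+x)/s| ≤ (1+R)*(e N)*R*s⁻¹ := by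
        rw [abs_div, abs_mul, abs_of_pos hspos]
        calc |h N k - 1| * |s+x| / s ≤ (e N * R * s⁻¹) * ((1+R)*s) / s := by
              apply div_le_div_of_nonneg_right _ hspos.le
              exact mul_le_mul hh1 hsx (abs_nonneg _) (by positivity)
          _ = (1+R)*(e N)*R*s⁻¹ := by field_simp [hsne, (hc N).ne', (ne_of_gt hπbar_pos)]
      have u2 : |x/s| ≤ R*s⁻¹ := by
        rw [abs_div, abs_of_pos hspos]
        calc |x|/s ≤ R/s := div_le_div_of_nonneg_right hxR hspos.le
          _ = R*s⁻¹ := by ring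
      have u3 : |(s+x)*(q N - 1)/s^3| ≤ (1+R)*(q N+1)*s⁻¹ := by
        rw [abs_div, abs_mul, abs_pow, abs_of_pos hspos]
        calc |s+x| * |q N - 1| / s^3 ≤ ((1+R)*s) * (q N + 1) / s^3 := by
              apply div_le_div_of_nonneg_right _ (by positivity)
              exact mul_le_mul hsx hqabs (abs_nonneg _) (by positivity)
          _ = (1+R)*(q N+1)/s^2 := by field_simp [hsne, (hc N).ne', (ne_of_gt hπbar_pos)]
          _ ≤ (1+R)*(q N+1)/s := by
              have hss : s ≤ s^2 := by
                simpa using pow_le_pow_right₀ hs1 (by norm_num : 1 ≤ 2)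
              have := hq0 N
              gcongr
          _ = (1+R)*(q N+1)*s⁻¹ := by ring
      have u4 : |2*x/s| ≤ 2*R*s⁻¹ := by
        rw [abs_div, abs_mul, abs_of_pos hspos, abs_of_pos (by norm_num : (0:ℝ) < 2)]
        calc 2* |x|/s ≤ 2*R/s := by
              apply div_le_div_of_nonneg_right _ hspos.le
              linarith [hxR]
          _ = 2*R*s⁻¹ := by ring
      have u5 : |x^2/s^2| ≤ R^2*s⁻¹ := by
        rw [abs_div, abs_pow, abs_pow, abs_of_pos hspos]
        calc |x|^2/s^2 ≤ R^2/s^2 := by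
              apply div_le_div_of_nonneg_right _ (by positivity)
              exact pow_le_pow_left₀ (abs_nonneg x) hxR 2
          _ ≤ R^2/s := by
              have hss : s ≤ s^2 := by
                simpa using pow_le_pow_right₀ hs1 (by norm_num : 1 ≤ 2)
              gcongr
          _ = R^2*s⁻¹ := by ring
      calc |v2*((h N k - 1)*(s+x)/s + x/s) + πbar*((s+x)*(q N - 1)/s^3 + 2*x/s + x^2/s^2)|
          ≤ |v2*((h N k - 1)*(s+x)/s + x/s)|
            + |πbar*((s+x)*(q N - 1)/s^3 + 2*x/s + x^2/s^2)| := abs_add_le _ _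
        _ ≤ v2*((1+R)*(e N)*R*s⁻¹ + R*s⁻¹) + πbar*((1+R)*(q N+1)*s⁻¹ + 2*R*s⁻¹ + R^2*s⁻¹) := by
            apply add_le_add
            · rw [abs_mul, abs_of_nonneg hv2]
              apply mul_le_mul_of_nonneg_left _ hv2
              calc |(h N k - 1)*(s+x)/s + x/s| ≤ |(h N k - 1)*(s+x)/s| + |x/s| := abs_add_le _ _
                _ ≤ (1+R)*(e N)*R*s⁻¹ + R*s⁻¹ := add_le_add u1 u2
            · rw [abs_mul, abs_of_pos hπbar_pos]
              apply mul_le_mul_of_nonneg_left _ hπbar_pos.le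
              calc |(s+x)*(q N - 1)/s^3 + 2*x/s + x^2/s^2|
                  ≤ |(s+x)*(q N - 1)/s^3| + |2*x/s| + |x^2/s^2| := abs_add_three _ _ _
                _ ≤ (1+R)*(q N+1)*s⁻¹ + 2*R*s⁻¹ + R^2*s⁻¹ := by linarith only [u3, u4, u5]
        _ = (v2*((1+R)*(e N)*R + R) + πbar*((1+R)*(q N+1) + 2*R + R^2)) * s⁻¹ := by ring
    -- remainder bounds
    have hp3 : (h N k * (k:ℝ)) * |RA| ≤ (1+(e N)*R)*(1+R)*M₃*m₃/6*s⁻¹ := by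
      have hhk : h N k * (k:ℝ) ≤ (1+(e N)*R)*((1+R)*s^2) := by
        apply mul_le_mul hhub hkub hk0
        have := he0 N
        positivity
      calc (h N k * (k:ℝ)) * |RA| ≤ ((1+(e N)*R)*((1+R)*s^2)) * (m₃ * (M₃/(6*s^3))) := by
            apply mul_le_mul hhk hRAb (abs_nonneg _)
            have := he0 N
            positivity
        _ = (1+(e N)*R)*(1+R)*M₃*m₃/6*s⁻¹ := by field_simp [hsne, (hc N).ne', (ne_of_gt hπbar_pos)]
    have hp4 : β * |rB| ≤ πbar*(1+R)*(q N+(1+R))*M₃/6*s⁻¹ := by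
      have hβub : β ≤ πbar*(1+R)*(q N + (1+R)*s^2) := by
        rw [hβval]
        rw [div_le_iff₀ (by positivity : (0:ℝ) < s^2)]
        have hqk : q N * (k:ℝ) ≤ q N * ((1+R)*s^2) :=
          mul_le_mul_of_nonneg_left hkub (hq0 N)
        have hkk : (k:ℝ)*((k:ℝ)-1) ≤ ((1+R)*s^2)^2 := by
          have hA : (k:ℝ)*((k:ℝ)-1) ≤ (k:ℝ)*(k:ℝ) :=
            mul_le_mul_of_nonneg_left (by linarith only []) hk0
          have hB : (k:ℝ)*(k:ℝ) ≤ ((1+R)*s^2)*((1+R)*s^2) :=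
            mul_le_mul hkub hkub hk0 (by positivity)
          calc (k:ℝ)*((k:ℝ)-1) ≤ (k:ℝ)*(k:ℝ) := hA
            _ ≤ ((1+R)*s^2)*((1+R)*s^2) := hB
            _ = ((1+R)*s^2)^2 := by ring
        have h2 : q N * (k:ℝ) + (k:ℝ)*((k:ℝ)-1) ≤ q N * ((1+R)*s^2) + ((1+R)*s^2)^2 := by
          linarith only [hqk, hkk]
        calc πbar * (q N * (k:ℝ) + (k:ℝ)*((k:ℝ)-1))
            ≤ πbar * (q N * ((1+R)*s^2) + ((1+R)*s^2)^2) :=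
              mul_le_mul_of_nonneg_left h2 hπbar_pos.le
          _ = πbar*(1+R)*(q N + (1+R)*s^2) * s^2 := by ring
      have hfrac : (q N + (1+R)*s^2)/s^3 ≤ (q N + (1+R))/s := by
        rw [div_le_div_iff₀ (by positivity) hspos]
        have h2 : q N * s ≤ q N * s^3 :=
          mul_le_mul_of_nonneg_left
            (by simpa using pow_le_pow_right₀ hs1 (by norm_num : 1 ≤ 3)) (hq0 N)
        have h3 : (q N + (1+R)*s^2)*s = q N * s + (1+R)*s^3 := by ring
        have h4 : (q N + (1+R))*s^3 = q N * s^3 + (1+R)*s^3 := by ring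
        rw [h3, h4]
        linarith only [h2]
      calc β * |rB| ≤ (πbar*(1+R)*(q N + (1+R)*s^2)) * (M₃/(6*s^3)) := by
            apply mul_le_mul hβub hrBb (abs_nonneg _)
            have := hq0 N
            positivity
        _ = (πbar*(1+R)*M₃/6) * ((q N + (1+R)*s^2)/s^3) := by ring
        _ ≤ (πbar*(1+R)*M₃/6) * ((q N + (1+R))/s) :=
            mul_le_mul_of_nonneg_left hfrac (by positivity)
        _ = πbar*(1+R)*(q N+(1+R))*M₃/6*s⁻¹ := by ring
    -- combine
    rw [hsplit] -- hsplit LHS should match goal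
    calc |E₁*D1 + E₂*D2 + (h N k * (k:ℝ))*RA + β*rB|
        ≤ |E₁*D1 + E₂*D2 + (h N k * (k:ℝ))*RA| + |β*rB| := abs_add_le _ _
      _ ≤ (|E₁*D1| + |E₂*D2| + |(h N k * (k:ℝ))*RA|) + |β*rB| := by
          linarith only [abs_add_three (E₁*D1) (E₂*D2) ((h N k * (k:ℝ))*RA), abs_nonneg (β*rB)]
      _ ≤ |E₁| *M₁ + |E₂| *M₂ + (h N k * (k:ℝ))* |RA| + β* |rB| := by
          have b1 : |E₁*D1| ≤ |E₁| *M₁ := by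
            rw [abs_mul]; exact mul_le_mul_of_nonneg_left (hD1 x) (abs_nonneg _)
          have b2 : |E₂*D2| ≤ |E₂| *M₂ := by
            rw [abs_mul]; exact mul_le_mul_of_nonneg_left (hM₂ x) (abs_nonneg _)
          have b3 : |(h N k * (k:ℝ))*RA| = (h N k * (k:ℝ))* |RA| := by
            rw [abs_mul, abs_of_nonneg (mul_nonneg (hhpos N k).le hk0)]
          have b4 : |β*rB| = β* |rB| := by rw [abs_mul, abs_of_nonneg hβ0]
          rw [b3, b4]
          linarith only [b1, b2]
      _ ≤ πbar*((1+R)*(e N)*R + ((1+R)*(q N+1) + R^2) * s⁻¹)*M₁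
          + (v2*((1+R)*(e N)*R + R) + πbar*((1+R)*(q N+1) + 2*R + R^2)) * s⁻¹/2*M₂
          + (1+(e N)*R)*(1+R)*M₃*m₃/6*s⁻¹
          + πbar*(1+R)*(q N+(1+R))*M₃/6*s⁻¹ := by
          have c1 : |E₁| *M₁ ≤ πbar*((1+R)*(e N)*R + ((1+R)*(q N+1) + R^2) * s⁻¹)*M₁ :=
            mul_le_mul_of_nonneg_right hE₁b hM₁0
          have c2 : |E₂| *M₂ ≤ (v2*((1+R)*(e N)*R + R)
              + πbar*((1+R)*(q N+1) + 2*R + R^2)) * s⁻¹/2*M₂ :=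
            mul_le_mul_of_nonneg_right hE₂b hM₂0
          linarith only [c1, c2, hp3, hp4]
      _ = b N := by
          simp only [hbdef]
          rw [← hsdef]

  -- conclusion by squeezing
  apply tendsto_of_tendsto_of_tendsto_of_le_of_le' tendsto_const_nhds hbt
  · filter_upwards with N
    apply Real.sSup_nonneg
    rintro y ⟨k, hk, rfl⟩
    exact abs_nonneg _
  · filter_upwards [hσtop.eventually_ge_atTop 1] with N hs1
    apply Real.sSup_le _ (hb0 N)
    rintro y ⟨k, ⟨hk1, hkK⟩, rfl⟩
    exact key N hs1 k hk1 hkK
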